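/- For every downwards-closed subtree S of Ω, the set S̄ = S ⊔ ∂S equipped with the coarse wedge topology is a compact Hausdorff topological space. -/

import Mathlib

open TopologicalSpace

/-- A downwards-closed subtree of the tree `Ω` of finite sequences of naturals. -/
def IsDownwardsClosedSubtree (S : Set (List ℕ)) : Prop :=
  ∀ t ∈ S, ∀ s : List ℕ, s <+: t → s ∈ S

/-- `b : ℕ → ℕ` is an infinite branch of `S` if all its finite initial segments lie in `S`. -/
def IsBranch (S : Set (List ℕ)) (b : ℕ → ℕ) : Prop :=
  ∀ n : ℕ, (List.ofFn fun i : Fin n => b i) ∈ S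

/-- The set `∂S` of infinite branches, as a type. -/
abbrev Branch (S : Set (List ℕ)) : Type := {b : ℕ → ℕ // IsBranch S b}

/-- `S̄ = S ⊔ ∂S`. -/
abbrev TreeCompletion (S : Set (List ℕ)) : Type := ↥S ⊕ Branch S

/-- The extended order `⊑'` comparing an element `s ∈ S` with an element of `S̄`. -/
def extLE (S : Set (List ℕ)) (s : List ℕ) : TreeCompletion S → Prop
  | Sum.inl t => s <+: (t : List ℕ)
  | Sum.inr b => s = List.ofFn fun i : Fin s.length => (b : ℕ → ℕ) i

/-- The wedge `W_t = {u ∈ S̄ : t ⊑' u}`. -/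
def wedge (S : Set (List ℕ)) (t : List ℕ) : Set (TreeCompletion S) :=
  {u | extLE S t u}

/-- The coarse wedge topology on `S̄`, generated by the wedges `W_t`, `t ∈ S`,
together with their complements. -/
def coarseWedgeTopology (S : Set (List ℕ)) : TopologicalSpace (TreeCompletion S) :=
  TopologicalSpace.generateFrom
    ({A | ∃ t ∈ S, A = wedge S t} ∪ {A | ∃ t ∈ S, A = (wedge S t)ᶜ})

namespace Stmt14Aux

/-- The initial segment of `b` of length `n`. -/
def seg (b : ℕ → ℕ) (n : ℕ) : List ℕ := List.ofFn fun i : Fin n => b i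

@[simp] lemma seg_length (b : ℕ → ℕ) (n : ℕ) : (seg b n).length = n := by simp [seg]

@[simp] lemma seg_getElem (b : ℕ → ℕ) {n i : ℕ} (h : i < (seg b n).length) :
    (seg b n)[i] = b i := by simp [seg, List.getElem_ofFn]

lemma seg_prefix_seg (b : ℕ → ℕ) {m n : ℕ} (h : m ≤ n) : seg b m <+: seg b n := by
  rw [List.prefix_iff_eq_take]
  refine List.ext_getElem (by simp [h]) fun i h1 h2 => ?_
  simp [List.getElem_take]

lemma eq_seg_of_prefix {b : ℕ → ℕ} {n : ℕ} {l : List ℕ} (h : l <+: seg b n) :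
    l = seg b l.length := by
  refine List.ext_getElem (by simp) fun i h1 h2 => ?_
  have h3 := h.getElem (i := i) h1
  rw [h3, seg_getElem, seg_getElem]

lemma take_prefix_take {l : List ℕ} {m n : ℕ} (h : m ≤ n) : l.take m <+: l.take n := by
  have h' := List.take_prefix m (l.take n)
  rwa [List.take_take, Nat.min_eq_left h] at h'

lemma prefix_comm {l₁ l₂ l₃ : List ℕ} (h1 : l₁ <+: l₃) (h2 : l₂ <+: l₃) :
    l₁ <+: l₂ ∨ l₂ <+: l₁ := by
  rcases le_total l₁.length l₂.length with h | h
  · left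
    rw [List.prefix_iff_eq_take.mp h1, List.prefix_iff_eq_take.mp h2]
    exact take_prefix_take h
  · right
    rw [List.prefix_iff_eq_take.mp h1, List.prefix_iff_eq_take.mp h2]
    exact take_prefix_take h

variable (S : Set (List ℕ))

/-- The embedding of `S̄` into the Cantor cube `S → Bool`. -/
def f : TreeCompletion S → ↥S → Bool
  | Sum.inl v => fun t => decide ((t : List ℕ) <+: (v : List ℕ))
  | Sum.inr b => fun t => decide ((t : List ℕ) = seg (b : ℕ → ℕ) (t : List ℕ).length)

lemma f_eq_true_iff (u : TreeCompletion S) (t : ↥S) :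
    f S u t = true ↔ extLE S (t : List ℕ) u := by
  cases u <;> simp [f, extLE, seg] <;> exact ⟨of_decide_eq_true, decide_eq_true⟩

lemma wedge_eq (t : ↥S) : wedge S (t : List ℕ) = {u | f S u t = true} := by
  ext u; simp [wedge, f_eq_true_iff, Set.mem_setOf_eq]

lemma f_injective : Function.Injective (f S) := by
  intro u v huv
  match u, v with
  | Sum.inl s, Sum.inl s' =>
    have h1 : f S (Sum.inl s) s = f S (Sum.inl s') s := by rw [huv]
    have h2 : f S (Sum.inl s) s' = f S (Sum.inl s') s' := by rw [huv]
    simp only [f, decide_eq_true_eq, decide_eq_decide] at h1 h2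
    have hp : (s : List ℕ) <+: (s' : List ℕ) := h1.mp List.prefix_rfl
    have hp' : (s' : List ℕ) <+: (s : List ℕ) := h2.mpr List.prefix_rfl
    have : (s : List ℕ) = (s' : List ℕ) :=
      hp.eq_of_length (le_antisymm hp.length_le hp'.length_le)
    exact congrArg Sum.inl (Subtype.ext this)
  | Sum.inl s, Sum.inr b =>
    exfalso
    set n := (s : List ℕ).length + 1 with hn
    have ht : seg (b : ℕ → ℕ) n ∈ S := b.2 n
    have h1 : f S (Sum.inl s) ⟨_, ht⟩ = f S (Sum.inr b) ⟨_, ht⟩ := by rw [huv]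
    simp only [f, decide_eq_true_eq, decide_eq_decide] at h1
    have h2 : seg (b : ℕ → ℕ) n = seg (b : ℕ → ℕ) (seg (b : ℕ → ℕ) n).length := by
      simp
    have h3 := h1.mpr h2
    have := h3.length_le
    simp [hn] at this
  | Sum.inr b, Sum.inl s =>
    exfalso
    set n := (s : List ℕ).length + 1 with hn
    have ht : seg (b : ℕ → ℕ) n ∈ S := b.2 n
    have h1 : f S (Sum.inr b) ⟨_, ht⟩ = f S (Sum.inl s) ⟨_, ht⟩ := by rw [huv]
    simp only [f, decide_eq_true_eq, decide_eq_decide] at h1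
    have h2 : seg (b : ℕ → ℕ) n = seg (b : ℕ → ℕ) (seg (b : ℕ → ℕ) n).length := by
      simp
    have h3 := h1.mp h2
    have := h3.length_le
    simp [hn] at this
  | Sum.inr b, Sum.inr b' =>
    congr 1
    ext n
    by_contra hne
    have ht : seg (b : ℕ → ℕ) (n + 1) ∈ S := b.2 (n + 1)
    have h1 : f S (Sum.inr b) ⟨_, ht⟩ = f S (Sum.inr b') ⟨_, ht⟩ := by rw [huv]
    simp only [f, decide_eq_decide] at h1
    have h2 : seg (b : ℕ → ℕ) (n + 1)
        = seg (b' : ℕ → ℕ) (seg (b : ℕ → ℕ) (n + 1)).length := h1.mp (by simp)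
    have hlt : n < (seg (b : ℕ → ℕ) (n + 1)).length := by simp
    have h4 := List.getElem_of_eq h2 hlt
    simp only [seg_getElem] at h4
    exact hne h4

lemma topology_eq :
    coarseWedgeTopology S = TopologicalSpace.induced (f S) inferInstance := by
  apply le_antisymm
  · rw [← continuous_iff_le_induced (t₁ := coarseWedgeTopology S)]
    letI := coarseWedgeTopology S
    apply continuous_pi
    intro t
    rw [continuous_discrete_rng]
    intro c
    cases c
    · -- preimage of {false} is complement of the wedge
      have : (fun u => f S u t) ⁻¹' {false} = (wedge S (t : List ℕ))ᶜ := by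
        ext u
        simp [wedge_eq, Set.mem_preimage, Set.mem_compl_iff]
      rw [this]
      exact TopologicalSpace.GenerateOpen.basic _ (Or.inr ⟨t, t.2, rfl⟩)
    · have : (fun u => f S u t) ⁻¹' {true} = wedge S (t : List ℕ) := by
        ext u
        simp [wedge_eq, Set.mem_preimage]
      rw [this]
      exact TopologicalSpace.GenerateOpen.basic _ (Or.inl ⟨t, t.2, rfl⟩)
  · apply le_generateFrom
    rintro A (⟨t, ht, rfl⟩ | ⟨t, ht, rfl⟩)
    · refine isOpen_induced_iff.mpr ⟨(fun g => g ⟨t, ht⟩) ⁻¹' {true}, ?_, ?_⟩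
      · exact (continuous_apply _).isOpen_preimage _ (isOpen_discrete _)
      · ext u; simp [wedge_eq S ⟨t, ht⟩, Set.mem_preimage]
    · refine isOpen_induced_iff.mpr ⟨(fun g => g ⟨t, ht⟩) ⁻¹' {false}, ?_, ?_⟩
      · exact (continuous_apply _).isOpen_preimage _ (isOpen_discrete _)
      · ext u; simp [wedge_eq S ⟨t, ht⟩, Set.mem_preimage]


/-- The closed set of "chain indicators" in the Cantor cube. -/
def goodSet : Set (↥S → Bool) :=
  {g | (∀ h : ([] : List ℕ) ∈ S, g ⟨[], h⟩ = true) ∧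
       (∀ t t' : ↥S, (t : List ℕ) <+: (t' : List ℕ) → g t' = true → g t = true) ∧
       (∀ t t' : ↥S, g t = true → g t' = true →
         (t : List ℕ) <+: (t' : List ℕ) ∨ (t' : List ℕ) <+: (t : List ℕ))}

lemma isClosed_eval (t : ↥S) (c : Bool) : IsClosed {g : ↥S → Bool | g t = c} := by
  have : {g : ↥S → Bool | g t = c} = (fun g : ↥S → Bool => g t) ⁻¹' {c} := rfl
  rw [this]
  exact (isClosed_discrete {c}).preimage (continuous_apply t)

lemma isClosed_goodSet : IsClosed (goodSet S) := by
  have e : goodSet S =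
      (⋂ h : ([] : List ℕ) ∈ S, {g : ↥S → Bool | g ⟨[], h⟩ = true}) ∩
      ((⋂ t : ↥S, ⋂ t' : ↥S, ⋂ _ : (t : List ℕ) <+: (t' : List ℕ),
          {g : ↥S → Bool | g t' = true → g t = true}) ∩
       (⋂ t : ↥S, ⋂ t' : ↥S,
          {g : ↥S → Bool | g t = true → g t' = true →
            ((t : List ℕ) <+: (t' : List ℕ) ∨ (t' : List ℕ) <+: (t : List ℕ))})) := by
    ext g
    simp only [goodSet, Set.mem_inter_iff, Set.mem_iInter, Set.mem_setOf_eq]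
  rw [e]
  refine IsClosed.inter (isClosed_iInter fun h => isClosed_eval S _ _) (IsClosed.inter ?_ ?_)
  · refine isClosed_iInter fun t => isClosed_iInter fun t' => isClosed_iInter fun _ => ?_
    have : {g : ↥S → Bool | g t' = true → g t = true}
        = {g : ↥S → Bool | g t' = false} ∪ {g : ↥S → Bool | g t = true} := by
      ext g; cases h : g t' <;> simp [h]
    rw [this]
    exact (isClosed_eval S t' false).union (isClosed_eval S t true)
  · refine isClosed_iInter fun t => isClosed_iInter fun t' => ?_
    by_cases hc : (t : List ℕ) <+: (t' : List ℕ) ∨ (t' : List ℕ) <+: (t : List ℕ)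
    · have : {g : ↥S → Bool | g t = true → g t' = true →
          ((t : List ℕ) <+: (t' : List ℕ) ∨ (t' : List ℕ) <+: (t : List ℕ))} = Set.univ := by
        ext g; simp [hc]
      rw [this]; exact isClosed_univ
    · have : {g : ↥S → Bool | g t = true → g t' = true →
          ((t : List ℕ) <+: (t' : List ℕ) ∨ (t' : List ℕ) <+: (t : List ℕ))}
          = {g : ↥S → Bool | g t = false} ∪ {g : ↥S → Bool | g t' = false} := by
        ext g; cases h : g t <;> cases h' : g t' <;> simp [h, h', hc]
      rw [this]
      exact (isClosed_eval S t false).union (isClosed_eval S t' false)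

lemma range_f (hS : IsDownwardsClosedSubtree S) (hnil : ([] : List ℕ) ∈ S) :
    Set.range (f S) = goodSet S := by
  apply Set.Subset.antisymm
  · rintro _ ⟨u, rfl⟩
    match u with
    | Sum.inl s =>
      refine ⟨fun h => ?_, fun t t' hp h' => ?_, fun t t' h h' => ?_⟩
      · simp [f]
      · simp only [f, decide_eq_true_eq] at h' ⊢
        exact hp.trans h'
      · simp only [f, decide_eq_true_eq] at h h'
        exact prefix_comm h h'
    | Sum.inr b =>
      refine ⟨fun h => ?_, fun t t' hp h' => ?_, fun t t' h h' => ?_⟩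
      · simp [f, seg]
      · simp only [f, decide_eq_true_eq] at h' ⊢
        exact eq_seg_of_prefix (h' ▸ hp)
      · simp only [f, decide_eq_true_eq] at h h'
        rcases le_total (t : List ℕ).length (t' : List ℕ).length with hl | hl
        · left; rw [h, h']; exact seg_prefix_seg _ hl
        · right; rw [h, h']; exact seg_prefix_seg _ hl
  · rintro g ⟨h1, h2, h3⟩
    have huniq : ∀ t t' : ↥S, g t = true → g t' = true →
        (t : List ℕ).length = (t' : List ℕ).length → (t : List ℕ) = (t' : List ℕ) := by
      intro t t' ht ht' hl
      rcases h3 t t' ht ht' with hp | hp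
      · exact hp.eq_of_length hl
      · exact (hp.eq_of_length hl.symm).symm
    by_cases hmax : ∃ s : ↥S, g s = true ∧
        ∀ t : ↥S, g t = true → (t : List ℕ).length ≤ (s : List ℕ).length
    · obtain ⟨s, hs, hsmax⟩ := hmax
      refine ⟨Sum.inl s, funext fun t => ?_⟩
      simp only [f]
      by_cases hp : (t : List ℕ) <+: (s : List ℕ)
      · have := h2 t s hp hs
        simp [hp, this]
      · have hft : g t ≠ true := by
          intro hgt
          rcases h3 t s hgt hs with h | h
          · exact hp h
          · have hl := hsmax t hgt
            have heq : (s : List ℕ) = (t : List ℕ) :=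
              h.eq_of_length (le_antisymm h.length_le hl)
            exact hp (by rw [← heq])
        rcases Bool.eq_false_or_eq_true (g t) with hgt | hgt
        · exact absurd hgt hft
        · rw [hgt, decide_eq_false hp]
    · push_neg at hmax
      have hlong : ∀ n : ℕ, ∃ t : ↥S, g t = true ∧ (t : List ℕ).length = n := by
        have hub : ∀ n : ℕ, ∃ t : ↥S, g t = true ∧ n ≤ (t : List ℕ).length := by
          intro n
          induction n with
          | zero => exact ⟨⟨[], hnil⟩, h1 hnil, Nat.zero_le _⟩
          | succ k ih =>
            obtain ⟨t, hgt, hlen⟩ := ih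
            obtain ⟨t', hgt', hlen'⟩ := hmax t hgt
            exact ⟨t', hgt', by omega⟩
        intro n
        obtain ⟨t, hgt, hlen⟩ := hub n
        have hp : (t : List ℕ).take n <+: (t : List ℕ) := List.take_prefix _ _
        have hmem : (t : List ℕ).take n ∈ S := hS _ t.2 _ hp
        refine ⟨⟨_, hmem⟩, h2 ⟨_, hmem⟩ t hp hgt, ?_⟩
        simp only [List.length_take]
        omega
      choose c hc1 hc2 using hlong
      have hcc : ∀ {m n : ℕ}, m ≤ n → (c m : List ℕ) <+: (c n : List ℕ) := by
        intro m n hmn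
        rcases h3 (c m) (c n) (hc1 m) (hc1 n) with hp | hp
        · exact hp
        · have hl := hp.length_le
          rw [hc2, hc2] at hl
          have heq : (c n : List ℕ) = (c m : List ℕ) :=
            hp.eq_of_length (by rw [hc2, hc2]; omega)
          rw [heq]
      set b : ℕ → ℕ := fun n => (c (n + 1) : List ℕ).getD n 0 with hb
      have hbval : ∀ i : ℕ, b i = (c (i + 1) : List ℕ)[i]'(by rw [hc2]; omega) := by
        intro i
        rw [hb]
        exact List.getD_eq_getElem _ _ (by rw [hc2]; omega)
      have cseg : ∀ n : ℕ, (c n : List ℕ) = seg b n := by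
        intro n
        refine List.ext_getElem (by rw [hc2]; simp) fun i hi1 hi2 => ?_
        have hi : i < n := by rwa [hc2] at hi1
        have hpre : (c (i + 1) : List ℕ) <+: (c n : List ℕ) := hcc (by omega)
        have hh := hpre.getElem (i := i) (by rw [hc2]; omega)
        rw [seg_getElem, hbval i, ← hh]
      have hbranch : IsBranch S b := by
        intro n
        show seg b n ∈ S
        rw [← cseg n]
        exact (c n).2
      refine ⟨Sum.inr ⟨b, hbranch⟩, funext fun t => ?_⟩
      simp only [f]
      rcases Bool.eq_false_or_eq_true (g t) with hgt | hgt
      · rw [hgt]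
        apply decide_eq_true
        have hteq : (t : List ℕ) = (c (t : List ℕ).length : List ℕ) :=
          huniq t (c _) hgt (hc1 _) (by rw [hc2])
        rw [← cseg]
        exact hteq
      · rw [hgt]
        apply decide_eq_false
        intro heq
        have hteq : t = c (t : List ℕ).length :=
          Subtype.ext (by rw [cseg]; exact heq)
        have hgt' : g t = true := by rw [hteq]; exact hc1 _
        rw [hgt'] at hgt
        exact absurd hgt (by simp)

end Stmt14Aux

theorem stmt14 (S : Set (List ℕ)) (hS : IsDownwardsClosedSubtree S) :
    @CompactSpace (TreeCompletion S) (coarseWedgeTopology S) ∧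
      @T2Space (TreeCompletion S) (coarseWedgeTopology S) := by
  letI : TopologicalSpace (TreeCompletion S) := coarseWedgeTopology S
  have hind : Topology.IsInducing (Stmt14Aux.f S) := ⟨Stmt14Aux.topology_eq S⟩
  have hemb : Topology.IsEmbedding (Stmt14Aux.f S) := ⟨hind, Stmt14Aux.f_injective S⟩
  have hclosed : IsClosed (Set.range (Stmt14Aux.f S)) := by
    by_cases hnil : ([] : List ℕ) ∈ S
    · rw [Stmt14Aux.range_f S hS hnil]
      exact Stmt14Aux.isClosed_goodSet S
    · have he : IsEmpty (TreeCompletion S) := by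
        constructor
        rintro (s | b)
        · exact hnil (hS _ s.2 [] List.nil_prefix)
        · exact hnil (by simpa using b.2 0)
      rw [Set.range_eq_empty]
      exact isClosed_empty
  constructor
  · refine ⟨hind.isCompact_iff.mpr ?_⟩
    rw [Set.image_univ]
    exact hclosed.isCompact
  · exact hemb.t2Space
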